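/- arXiv:1811.12434 — 3 statements merged into one kernel-verified Lean document; each statement's English description precedes it below -/
import Mathlib

section
/- Let (α_k)_{k≥0} be a sequence of nonnegative real numbers satisfying α_k ≤ 1 + δ α_{k-1}² for all k ≥ 1, where δ > 0 satisfies δ ≤ 1/(4(1 + α₀)). Then α_k ≤ 2 + 4^{1-2^k} α₀ for all k ≥ 0. -/
theorem stmt3 (α : ℕ → ℝ) (δ : ℝ)
    (hnonneg : ∀ k, 0 ≤ α k)
    (hrec : ∀ k : ℕ, 1 ≤ k → α k ≤ 1 + δ * (α (k - 1)) ^ 2)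
    (hδ : 0 < δ) (hδ' : δ ≤ 1 / (4 * (1 + α 0))) :
    ∀ k : ℕ, α k ≤ 2 + (4 : ℝ) ^ ((1 : ℝ) - 2 ^ k) * α 0 := by
  have ha : 0 ≤ α 0 := hnonneg 0
  have hpos : (0:ℝ) < 4 * (1 + α 0) := by nlinarith
  have hδ'' : δ * (4 * (1 + α 0)) ≤ 1 := by
    rw [le_div_iff₀ hpos] at hδ'
    linarith
  intro k
  induction k with
  | zero => simp
  | succ k ih =>
    set c : ℝ := (4 : ℝ) ^ ((1 : ℝ) - 2 ^ k) with hc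
    have hc0 : 0 < c := Real.rpow_pos_of_pos (by norm_num) _
    have hc1 : c ≤ 1 := by
      apply Real.rpow_le_one_of_one_le_of_nonpos (by norm_num)
      have : (1:ℝ) ≤ 2 ^ k := one_le_pow₀ (by norm_num)
      linarith
    have hstep : (4 : ℝ) ^ ((1 : ℝ) - 2 ^ (k+1)) = c ^ 2 / 4 := by
      rw [hc, ← Real.rpow_natCast ((4:ℝ) ^ ((1:ℝ) - 2^k)) 2,
        ← Real.rpow_mul (by norm_num)]
      rw [eq_div_iff (by norm_num : (4:ℝ) ≠ 0),
        ← Real.rpow_add_one (by norm_num : (4:ℝ) ≠ 0)]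
      congr 1
      push_cast
      ring
    have hk := hrec (k+1) (Nat.le_add_left 1 k)
    simp only [Nat.add_sub_cancel] at hk
    have hαk : 0 ≤ α k := hnonneg k
    rw [hstep]
    have h1 : δ * (α k)^2 ≤ δ * (2 + c * α 0)^2 := by
      apply mul_le_mul_of_nonneg_left _ (le_of_lt hδ)
      apply pow_le_pow_left₀ hαk ih
    nlinarith [mul_nonneg (le_of_lt hc0) ha, sq_nonneg (2 - c), sq_nonneg c,
      mul_nonneg (mul_nonneg (le_of_lt hc0) (le_of_lt hc0)) ha]
end

section
/- Let V be a finite-dimensional real inner product space with inner product [·,·], let B and C be symmetric operators on V with C positive definite, and suppose the inf-sup bounds c₁ ‖x‖_* ≤ sup_{y≠0} [Bx, y]/‖y‖_* ≤ c₂ ‖x‖_* hold for some norm ‖·‖_* with [Cy,y] ≍ ‖y‖_*² (constants c₃ ‖y‖_*² ≤ [Cy,y] ≤ c₄ ‖y‖_*²). Then [B C⁻¹ B x, x] ≍ ‖x‖_*², i.e. there are constants depending only on c₁,...,c₄ with lower bound (c₁²/c₄)‖x‖_*² and upper bound (c₂²/c₃)‖x‖_*². -/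
open RealInnerProductSpace in
theorem stmt11 {V : Type*} [NormedAddCommGroup V] [InnerProductSpace ℝ V]
    [FiniteDimensional ℝ V]
    (B C Cinv : V →ₗ[ℝ] V)
    (hB : ∀ x y : V, ⟪B x, y⟫ = ⟪x, B y⟫)
    (hC : ∀ x y : V, ⟪C x, y⟫ = ⟪x, C y⟫)
    (hCpos : ∀ x : V, x ≠ 0 → 0 < ⟪C x, x⟫)
    (hCinv₁ : Cinv ∘ₗ C = LinearMap.id) (hCinv₂ : C ∘ₗ Cinv = LinearMap.id)
    (N : V → ℝ) (hN : ∀ y : V, y ≠ 0 → 0 < N y)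
    (c₁ c₂ c₃ c₄ : ℝ) (hc₁ : 0 < c₁) (hc₂ : 0 < c₂) (hc₃ : 0 < c₃) (hc₄ : 0 < c₄)
    (hsuplow : ∀ x : V, c₁ * N x ≤ ⨆ y : {y : V // y ≠ 0}, ⟪B x, (y : V)⟫ / N (y : V))
    (hsuphigh : ∀ x : V, (⨆ y : {y : V // y ≠ 0}, ⟪B x, (y : V)⟫ / N (y : V)) ≤ c₂ * N x)
    (hCequiv₁ : ∀ y : V, c₃ * N y ^ 2 ≤ ⟪C y, y⟫)
    (hCequiv₂ : ∀ y : V, ⟪C y, y⟫ ≤ c₄ * N y ^ 2) :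
    ∀ x : V, c₁ ^ 2 / c₄ * N x ^ 2 ≤ ⟪B (Cinv (B x)), x⟫ ∧
      ⟪B (Cinv (B x)), x⟫ ≤ c₂ ^ 2 / c₃ * N x ^ 2 := by
  -- symmetry of the C-form
  have hsym : ∀ u v : V, ⟪C u, v⟫ = ⟪C v, u⟫ := by
    intro u v; rw [hC u v, real_inner_comm]
  have psd : ∀ u : V, 0 ≤ ⟪C u, u⟫ := by
    intro u
    rcases eq_or_ne u 0 with h | h
    · simp [h]
    · exact (hCpos u h).le
  -- Cauchy–Schwarz for the C-form
  have cs : ∀ u v : V, ⟪C u, v⟫ ^ 2 ≤ ⟪C u, u⟫ * ⟪C v, v⟫ := by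
    intro u v
    have hq : ∀ t : ℝ, 0 ≤ ⟪C v, v⟫ * (t * t) + (2 * ⟪C u, v⟫) * t + ⟪C u, u⟫ := by
      intro t
      have h0 := psd (u + t • v)
      have expand : ⟪C (u + t • v), u + t • v⟫
          = ⟪C v, v⟫ * (t * t) + (2 * ⟪C u, v⟫) * t + ⟪C u, u⟫ := by
        have h1 : ⟪C v, u⟫ = ⟪C u, v⟫ := hsym v u
        simp only [map_add, map_smul, inner_add_left, inner_add_right,
          real_inner_smul_left, real_inner_smul_right, h1]
        ring
      linarith [expand ▸ h0]
    have hd := discrim_le_zero hq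
    rw [discrim] at hd
    nlinarith [hd]
  intro x
  set r : V := Cinv (B x) with hr
  have hCr : C r = B x := LinearMap.congr_fun hCinv₂ (B x)
  have key : ⟪B (Cinv (B x)), x⟫ = ⟪C r, r⟫ := by
    rw [← hr, hB, ← hCr, real_inner_comm]
  have hcc : 0 ≤ c₄ * ⟪C r, r⟫ := mul_nonneg hc₄.le (psd r)
  cases isEmpty_or_nonempty {y : V // y ≠ 0} with
  | inl he =>
    -- V is trivial
    have hx0 : x = 0 := by
      by_contra h
      exact he.false ⟨x, h⟩
    have hN0 : N (0 : V) = 0 := by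
      have h1 := hsuplow 0
      have h2 := hsuphigh 0
      rw [Real.iSup_of_isEmpty] at h1 h2
      nlinarith
    subst hx0
    constructor
    · simp [hN0, map_zero]
    · simp [hN0, map_zero]
  | inr hne =>
    have hN0 : N (0 : V) = 0 := by
      have h1 := hsuplow 0
      have h2 := hsuphigh 0
      have hz : (⨆ y : {y : V // y ≠ 0}, ⟪B (0 : V), (y : V)⟫ / N (y : V)) = 0 := by
        have : ∀ y : {y : V // y ≠ 0}, ⟪B (0 : V), (y : V)⟫ / N (y : V) = 0 := by
          intro y; simp [map_zero]
        simp only [this, ciSup_const]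
      rw [hz] at h1 h2
      nlinarith
    have hNnn : ∀ z : V, 0 ≤ N z := by
      intro z
      rcases eq_or_ne z 0 with h | h
      · rw [h, hN0]
      · exact (hN z h).le
    -- pointwise bound on the sup quotients
    have hpt : ∀ y : {y : V // y ≠ 0},
        ⟪B x, (y : V)⟫ / N (y : V) ≤ Real.sqrt (c₄ * ⟪C r, r⟫) := by
      intro y
      have hNy := hN y y.2
      have h1 : ⟪B x, (y : V)⟫ ^ 2 ≤ (c₄ * ⟪C r, r⟫) * N (y : V) ^ 2 := by
        rw [← hCr]
        have := cs r (y : V)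
        have h2 := hCequiv₂ (y : V)
        nlinarith [psd r]
      have h3 : ⟪B x, (y : V)⟫ ≤ Real.sqrt (c₄ * ⟪C r, r⟫) * N (y : V) := by
        calc ⟪B x, (y : V)⟫ ≤ Real.sqrt ((c₄ * ⟪C r, r⟫) * N (y : V) ^ 2) :=
              Real.le_sqrt_of_sq_le h1
          _ = Real.sqrt (c₄ * ⟪C r, r⟫) * N (y : V) := by
              rw [Real.sqrt_mul hcc, Real.sqrt_sq hNy.le]
      rw [div_le_iff₀ hNy]
      exact h3
    have hbdd : BddAbove (Set.range fun y : {y : V // y ≠ 0} =>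
        ⟪B x, (y : V)⟫ / N (y : V)) := by
      refine ⟨Real.sqrt (c₄ * ⟪C r, r⟫), ?_⟩
      rintro _ ⟨y, rfl⟩
      exact hpt y
    -- lower bound
    have hlow : c₁ ^ 2 / c₄ * N x ^ 2 ≤ ⟪C r, r⟫ := by
      have h1 : c₁ * N x ≤ Real.sqrt (c₄ * ⟪C r, r⟫) :=
        (hsuplow x).trans (ciSup_le hpt)
      have h2 : (c₁ * N x) ^ 2 ≤ c₄ * ⟪C r, r⟫ := by
        have := pow_le_pow_left₀ (mul_nonneg hc₁.le (hNnn x)) h1 2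
        rwa [Real.sq_sqrt hcc] at this
      rw [div_mul_eq_mul_div, div_le_iff₀ hc₄]
      nlinarith
    -- upper bound
    have hhigh : ⟪C r, r⟫ ≤ c₂ ^ 2 / c₃ * N x ^ 2 := by
      rcases eq_or_ne r 0 with h | h
      · rw [h]
        simp only [map_zero, inner_zero_left]
        positivity
      · have hNr := hN r h
        have h1 : ⟪B x, r⟫ / N r ≤ c₂ * N x :=
          (le_ciSup hbdd (⟨r, h⟩ : {y : V // y ≠ 0})).trans (hsuphigh x)
        have h2 : ⟪C r, r⟫ ≤ c₂ * N x * N r := by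
          rw [hCr]
          rw [div_le_iff₀ hNr] at h1
          nlinarith
        have h3 := hCequiv₁ r
        have h4 : N r ≤ c₂ / c₃ * N x := by
          have : c₃ * N r ^ 2 ≤ c₂ * N x * N r := le_trans h3 h2
          rw [div_mul_eq_mul_div, le_div_iff₀ hc₃]
          nlinarith
        calc ⟪C r, r⟫ ≤ c₂ * N x * N r := h2
          _ ≤ c₂ * N x * (c₂ / c₃ * N x) := by
              exact mul_le_mul_of_nonneg_left h4 (mul_nonneg hc₂.le (hNnn x))
          _ = c₂ ^ 2 / c₃ * N x ^ 2 := by ring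
    rw [key]
    exact ⟨hlow, hhigh⟩
end

section
/- Let (a_k)_{k≥0} be nonnegative with a_k ≤ η₂ + C⋆ a_{k-1}² for k ≥ 1 and a₀ ≤ A₀, where C⋆ η₂ + C⋆ A₀ ≤ 1/4. Then a_k ≤ 2η₂ + 4^{1-2^k} A₀ for all k ≥ 0. -/
theorem stmt18 (a : ℕ → ℝ) (η₂ Cstar A₀ : ℝ)
    (hnonneg : ∀ k, 0 ≤ a k)
    (hrec : ∀ k : ℕ, 1 ≤ k → a k ≤ η₂ + Cstar * (a (k - 1)) ^ 2)
    (h0 : a 0 ≤ A₀)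
    (hη : 0 < η₂) (hC : 0 < Cstar) (hA₀ : 0 ≤ A₀)
    (hsmall : Cstar * η₂ + Cstar * A₀ ≤ 1 / 4) :
    ∀ k : ℕ, a k ≤ 2 * η₂ + (4 : ℝ) ^ ((1 : ℝ) - 2 ^ k) * A₀ := by
  intro k
  induction k with
  | zero =>
    have : ((4:ℝ) ^ ((1:ℝ) - 2 ^ (0:ℕ))) = 1 := by norm_num
    rw [this]
    nlinarith
  | succ n ih =>
    set b : ℝ := (4:ℝ) ^ ((1:ℝ) - 2 ^ n) with hbdef
    have hbpos : 0 < b := Real.rpow_pos_of_pos (by norm_num) _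
    have h2n : (1:ℝ) ≤ 2 ^ n := one_le_pow₀ (by norm_num)
    have hble : b ≤ 1 :=
      Real.rpow_le_one_of_one_le_of_nonpos (by norm_num) (by linarith)
    have hexp : ((1:ℝ) - 2 ^ (n+1)) = ((1:ℝ) - 2 ^ n) * 2 - 1 := by
      rw [pow_succ]; ring
    have hbsucc : (4:ℝ) ^ ((1:ℝ) - 2 ^ (n+1)) = b ^ 2 / 4 := by
      rw [hexp, Real.rpow_sub (by norm_num), Real.rpow_one,
        Real.rpow_mul (by norm_num)]
      rw [← Real.rpow_natCast ((4:ℝ) ^ ((1:ℝ) - 2 ^ n)) 2]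
      norm_num [hbdef]
    have h1 : a (n+1) ≤ η₂ + Cstar * (a n) ^ 2 := by
      simpa using hrec (n+1) (by omega)
    have han : 0 ≤ a n := hnonneg n
    have hsq : (a n) ^ 2 ≤ (2 * η₂ + b * A₀) ^ 2 := by
      have : 0 ≤ 2 * η₂ + b * A₀ := by positivity
      nlinarith
    have hCA : Cstar * A₀ ≤ 1 / 4 := by nlinarith [mul_pos hC hη]
    have hmid : Cstar * η₂ * (b * A₀) ≤ Cstar * η₂ * A₀ := by
      have : b * A₀ ≤ A₀ := by nlinarith
      exact mul_le_mul_of_nonneg_left this (by positivity)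
    have h4 : Cstar * (b ^ 2 * A₀ ^ 2) ≤ b ^ 2 * A₀ / 4 := by
      have hb2A : 0 ≤ b ^ 2 * A₀ := by positivity
      nlinarith
    have h5 : 4 * η₂ * (Cstar * η₂ + Cstar * A₀) ≤ 4 * η₂ * (1 / 4) :=
      mul_le_mul_of_nonneg_left hsmall (by positivity)
    have hkey : Cstar * (2 * η₂ + b * A₀) ^ 2 ≤ η₂ + b ^ 2 * A₀ / 4 := by
      nlinarith [hmid, h4, h5]
    have hCa := mul_le_mul_of_nonneg_left hsq hC.le
    rw [hbsucc]
    nlinarith [h1, hCa, hkey]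
end
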